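/- Let SNR > 0 and let C(s) = log₂(e)·e^{1/s}·E₁(1/s). Then SNR·C'(SNR) < C(SNR); equivalently the factor √(C(SNR)/(SNR·C'(SNR))) by which power boosting increases the optimal pilot power fraction is strictly greater than 1. -/

import Mathlib

open MeasureTheory
open scoped ENNReal

/-- Exponential integral of order 1. -/
noncomputable def expInt (ζ : ℝ) : ℝ := ∫ t in Set.Ioi (1 : ℝ), t⁻¹ * Real.exp (-ζ * t)

/-- The ergodic Rayleigh-fading capacity `C(s) = log₂(e)·e^{1/s}·E₁(1/s)`. -/
noncomputable def capC (s : ℝ) : ℝ := Real.logb 2 (Real.exp 1) * Real.exp (1 / s) * expInt (1 / s)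

lemma integral_exp_decay {b : ℝ} (hb : 0 < b) :
    ∫ x in Set.Ioi (1:ℝ), Real.exp (-b * x) = Real.exp (-b) / b := by
  have hderiv : ∀ x ∈ Set.Ici (1:ℝ),
      HasDerivAt (fun x => -Real.exp (-b * x) / b) (Real.exp (-b * x)) x := by
    intro x _
    have h1 : HasDerivAt (fun x : ℝ => -b * x) (-b) x := by
      simpa using (hasDerivAt_id x).const_mul (-b)
    have h2 := (h1.exp).neg.div_const b
    convert h2 using 1
    · rfl
    · rfl
    · rfl
    · field_simp
  have hint : IntegrableOn (fun x => Real.exp (-b * x)) (Set.Ioi (1:ℝ)) :=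
    exp_neg_integrableOn_Ioi 1 hb
  have htend : Filter.Tendsto (fun x => -Real.exp (-b * x) / b) Filter.atTop (nhds 0) := by
    have : Filter.Tendsto (fun x : ℝ => -b * x) Filter.atTop Filter.atBot :=
      Filter.tendsto_atBot_mono' Filter.atTop (by filter_upwards with x; rfl)
        (Filter.tendsto_id.const_mul_atTop_of_neg (neg_neg_iff_pos.mpr hb) |>.mono_right le_rfl)
    have h3 := Real.tendsto_exp_atBot.comp this
    have := (h3.neg).div_const b
    simpa using this
  have := MeasureTheory.integral_Ioi_of_hasDerivAt_of_tendsto' hderiv hint htend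
  simp only [this]
  field_simp
  ring

lemma integrable_aux {ζ : ℝ} (hζ : 0 < ζ) :
    IntegrableOn (fun t => t⁻¹ * Real.exp (-ζ * t)) (Set.Ioi (1:ℝ)) := by
  have hmeas : AEStronglyMeasurable (fun t => t⁻¹ * Real.exp (-ζ * t))
      (volume.restrict (Set.Ioi (1:ℝ))) := by
    apply ContinuousOn.aestronglyMeasurable _ measurableSet_Ioi
    intro t ht
    have ht0 : (0:ℝ) < t := lt_trans one_pos ht
    exact ((continuousAt_inv₀ ht0.ne').mul
      ((Real.continuous_exp.comp (continuous_const.mul continuous_id)).continuousAt)).continuousWithinAt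
  refine (exp_neg_integrableOn_Ioi 1 hζ).mono' hmeas ?_
  rw [MeasureTheory.ae_restrict_iff' measurableSet_Ioi]
  filter_upwards with t ht
  have ht1 : (1:ℝ) < t := ht
  have ht0 : (0:ℝ) < t := by linarith
  rw [norm_mul, Real.norm_eq_abs, Real.norm_eq_abs, abs_of_pos (inv_pos.mpr ht0),
    abs_of_pos (Real.exp_pos _)]
  have h1 : t⁻¹ ≤ 1 := by
    rw [inv_le_one_iff₀]
    right; linarith
  nlinarith [Real.exp_pos (-ζ * t), inv_pos.mpr ht0]

lemma expInt_lower {ζ : ℝ} (hζ : 0 < ζ) : Real.exp (-ζ) / (1 + ζ) < expInt ζ := by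
  have h1ζ : 0 < 1 + ζ := by linarith
  -- lower function
  have hlow : ∫ t in Set.Ioi (1:ℝ), Real.exp 1 * Real.exp (-(1+ζ) * t)
      = Real.exp (-ζ) / (1 + ζ) := by
    rw [MeasureTheory.integral_const_mul, integral_exp_decay h1ζ, ← mul_div_assoc,
      ← Real.exp_add, show (1:ℝ) + -(1+ζ) = -ζ from by ring]
  have hintlow : IntegrableOn (fun t => Real.exp 1 * Real.exp (-(1+ζ) * t)) (Set.Ioi (1:ℝ)) :=
    (exp_neg_integrableOn_Ioi 1 h1ζ).const_mul _
  have hintE := integrable_aux hζ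
  -- pointwise strict bound on Ioi 1
  have hpt : ∀ t ∈ Set.Ioi (1:ℝ),
      Real.exp 1 * Real.exp (-(1+ζ) * t) < t⁻¹ * Real.exp (-ζ * t) := by
    intro t ht
    have ht1 : (1:ℝ) < t := ht
    have ht0 : (0:ℝ) < t := by linarith
    have key : t < Real.exp (t - 1) := by
      have := Real.add_one_lt_exp (x := t - 1) (by intro h; linarith [sub_eq_zero.mp h])
      linarith
    have h2 : Real.exp 1 * Real.exp (-(1+ζ)*t) = Real.exp (1 - t) * Real.exp (-ζ * t) := by
      rw [← Real.exp_add, ← Real.exp_add]; ring_nf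
    rw [h2]
    have h3 : Real.exp (1 - t) < t⁻¹ := by
      have heq : Real.exp (1 - t) = (Real.exp (t - 1))⁻¹ := by
        rw [← Real.exp_neg, show -(t-1) = 1 - t from by ring]
      rw [heq]
      gcongr
    exact mul_lt_mul_of_pos_right h3 (Real.exp_pos _)
  -- strict integral inequality
  have hdiff : 0 < ∫ t in Set.Ioi (1:ℝ),
      (t⁻¹ * Real.exp (-ζ * t) - Real.exp 1 * Real.exp (-(1+ζ) * t)) := by
    rw [MeasureTheory.setIntegral_pos_iff_support_of_nonneg_ae]
    · have : Set.Ioi (1:ℝ) ⊆ Function.support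
          (fun t => t⁻¹ * Real.exp (-ζ * t) - Real.exp 1 * Real.exp (-(1+ζ) * t)) ∩
          Set.Ioi (1:ℝ) := by
        intro t ht
        refine ⟨?_, ht⟩
        simp only [Function.mem_support]
        have := hpt t ht
        intro h; linarith [sub_eq_zero.mp h]
      calc (0:ℝ≥0∞) < volume (Set.Ioi (1:ℝ)) := by simp
        _ ≤ _ := measure_mono this
    · rw [Filter.EventuallyLE, MeasureTheory.ae_restrict_iff' measurableSet_Ioi]
      filter_upwards with t ht
      have := hpt t ht
      simp only [Pi.zero_apply]
      linarith
    · exact hintE.sub hintlow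
  have heq : expInt ζ - Real.exp (-ζ) / (1 + ζ) = ∫ t in Set.Ioi (1:ℝ),
      (t⁻¹ * Real.exp (-ζ * t) - Real.exp 1 * Real.exp (-(1+ζ) * t)) := by
    rw [MeasureTheory.integral_sub hintE hintlow, hlow]; rfl
  linarith [heq ▸ hdiff]

lemma hasDerivAt_expInt {ζ : ℝ} (hζ : 0 < ζ) :
    HasDerivAt expInt (-(Real.exp (-ζ) / ζ)) ζ := by
  have hε : 0 < ζ / 2 := by positivity
  have key := hasDerivAt_integral_of_dominated_loc_of_deriv_le
    (F := fun (x : ℝ) (t : ℝ) => t⁻¹ * Real.exp (-x * t))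
    (F' := fun (x : ℝ) (t : ℝ) => -Real.exp (-x * t))
    (x₀ := ζ) (μ := volume.restrict (Set.Ioi (1:ℝ)))
    (bound := fun t => Real.exp (-(ζ/2) * t)) (Metric.ball_mem_nhds ζ hε)
    ?_ (integrable_aux hζ) ?_ ?_ (exp_neg_integrableOn_Ioi 1 hε) ?_
  · have hval : (∫ t in Set.Ioi (1:ℝ), -Real.exp (-ζ * t)) = -(Real.exp (-ζ) / ζ) := by
      rw [MeasureTheory.integral_neg, integral_exp_decay hζ]
    exact hval ▸ key.2
  · filter_upwards with x
    apply ContinuousOn.aestronglyMeasurable _ measurableSet_Ioi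
    intro t ht
    exact ((continuousAt_inv₀ (by linarith [Set.mem_Ioi.mp ht] : (0:ℝ) < t).ne').mul
      ((Real.continuous_exp.comp (continuous_const.mul continuous_id)).continuousAt)).continuousWithinAt
  · apply ContinuousOn.aestronglyMeasurable _ measurableSet_Ioi
    exact ((Real.continuous_exp.comp (continuous_const.mul continuous_id)).neg).continuousOn
  · rw [MeasureTheory.ae_restrict_iff' measurableSet_Ioi]
    filter_upwards with t ht
    intro x hx
    have ht1 : (1:ℝ) < t := ht
    have hx2 : ζ / 2 < x := by
      have := abs_lt.mp (by simpa [Real.dist_eq] using Metric.mem_ball.mp hx)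
      linarith [this.1]
    rw [norm_neg, Real.norm_eq_abs, abs_of_pos (Real.exp_pos _)]
    apply Real.exp_le_exp.mpr
    nlinarith
  · rw [MeasureTheory.ae_restrict_iff' measurableSet_Ioi]
    filter_upwards with t ht
    intro x _
    have ht0 : (0:ℝ) < t := by linarith [Set.mem_Ioi.mp ht]
    have h1 : HasDerivAt (fun x : ℝ => -x * t) (-t) x := by
      simpa using ((hasDerivAt_id x).neg.mul_const t)
    have h2 := (h1.exp).const_mul t⁻¹
    convert h2 using 1
    · rfl
    · field_simp

/-- For every `SNR > 0`, `SNR·C'(SNR) < C(SNR)`. -/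
theorem snr_deriv_lt_cap (SNR : ℝ) (hSNR : 0 < SNR) :
    SNR * deriv capC SNR < capC SNR := by
  set k := Real.logb 2 (Real.exp 1) with hk_def
  have hk : 0 < k := by
    rw [hk_def, Real.logb, Real.log_exp]
    positivity
  set ζ := 1 / SNR with hζ_def
  have hζ : 0 < ζ := by positivity
  -- derivative of the inner map
  have hinv : HasDerivAt (fun s : ℝ => 1 / s) (-(1 / SNR ^ 2)) SNR := by
    simpa [one_div] using (hasDerivAt_inv hSNR.ne')
  have hE := hasDerivAt_expInt hζ
  have hexp : HasDerivAt Real.exp (Real.exp ζ) ζ := Real.hasDerivAt_exp ζ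
  have hG : HasDerivAt (fun u => k * Real.exp u * expInt u)
      (k * Real.exp ζ * expInt ζ + k * Real.exp ζ * (-(Real.exp (-ζ) / ζ))) ζ := by
    exact ((hexp.const_mul k).mul hE)
  have hcap : HasDerivAt capC
      ((k * Real.exp ζ * expInt ζ + k * Real.exp ζ * (-(Real.exp (-ζ) / ζ))) * (-(1 / SNR ^ 2)))
      SNR := by
    have := hG.comp SNR hinv
    exact this
  rw [hcap.deriv]
  have hcapval : capC SNR = k * Real.exp ζ * expInt ζ := rfl
  have hkey := expInt_lower hζ
  have hee : Real.exp ζ * Real.exp (-ζ) = 1 := by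
    rw [← Real.exp_add]; simp
  have hsζ : SNR * ζ = 1 := by
    rw [hζ_def]
    field_simp
  rw [hcapval]
  have hX : 1 / (1 + ζ) < Real.exp ζ * expInt ζ := by
    have h := mul_lt_mul_of_pos_left hkey (Real.exp_pos ζ)
    have h4 : Real.exp ζ * (Real.exp (-ζ) / (1 + ζ)) = 1 / (1 + ζ) := by
      rw [← mul_div_assoc, hee]
    linarith [h4 ▸ h]
  have h1ζ : 0 < 1 + ζ := by linarith
  have hA : k * Real.exp ζ * (-(Real.exp (-ζ) / ζ)) = -(k / ζ) := by
    rw [show k * Real.exp ζ * (-(Real.exp (-ζ) / ζ))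
        = -(k * (Real.exp ζ * Real.exp (-ζ)) / ζ) from by ring, hee, mul_one]
  have hs1 : SNR * (-(1 / SNR ^ 2)) = -ζ := by
    rw [hζ_def]
    field_simp
  have hLHS : SNR * ((k * Real.exp ζ * expInt ζ + k * Real.exp ζ * (-(Real.exp (-ζ) / ζ))) *
      (-(1 / SNR ^ 2))) = -ζ * (k * Real.exp ζ * expInt ζ) + k := by
    rw [show SNR * ((k * Real.exp ζ * expInt ζ + k * Real.exp ζ * (-(Real.exp (-ζ) / ζ))) *
        (-(1 / SNR ^ 2)))
        = (k * Real.exp ζ * expInt ζ + k * Real.exp ζ * (-(Real.exp (-ζ) / ζ))) *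
          (SNR * (-(1 / SNR ^ 2))) from by ring, hs1, hA]
    field_simp
    ring
  rw [hLHS]
  have h2 : 1 < (Real.exp ζ * expInt ζ) * (1 + ζ) := by
    rw [div_lt_iff₀ h1ζ] at hX
    linarith
  nlinarith [mul_lt_mul_of_pos_left h2 hk]
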